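/- For fixed λ_2, ..., λ_K > 0, the function λ_1 ↦ Σ_{S ∋ 1} (-1)^{|S|-1}/(Σ_{i∈S} λ_i) + Σ_{S ⊆ {2,...,K}, S ≠ ∅} (-1)^{|S|-1}/(Σ_{i∈S} λ_i), equal to E[max_i T_i] where T_i ~ Exp(λ_i) are independent, is strictly decreasing in λ_1 on (0, ∞). -/

import Mathlib

open Finset

noncomputable def Hfun {ι : Type*} [DecidableEq ι] (w : ι → ℝ) (R : Finset ι) (m : ℕ)
    (x : ℝ) : ℝ :=
  ∑ T ∈ R.powerset, (-1 : ℝ) ^ T.card / (x + ∑ i ∈ T, w i) ^ (m + 1)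

lemma Hfun_insert {ι : Type*} [DecidableEq ι] (w : ι → ℝ) {R : Finset ι} {j : ι}
    (hj : j ∉ R) (m : ℕ) (x : ℝ) :
    Hfun w (insert j R) m x = Hfun w R m x - Hfun w R m (x + w j) := by
  unfold Hfun
  rw [Finset.sum_powerset_insert hj]
  have : ∀ T ∈ R.powerset,
      (-1 : ℝ) ^ (insert j T).card / (x + ∑ i ∈ insert j T, w i) ^ (m + 1)
        = -((-1 : ℝ) ^ T.card / (x + w j + ∑ i ∈ T, w i) ^ (m + 1)) := by
    intro T hT
    have hjT : j ∉ T := fun h => hj (Finset.mem_powerset.1 hT h)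
    rw [Finset.card_insert_of_notMem hjT, Finset.sum_insert hjT, pow_succ]
    ring_nf
  rw [Finset.sum_congr rfl this, Finset.sum_neg_distrib]
  ring

lemma Hfun_hasDerivAt {ι : Type*} [DecidableEq ι] (w : ι → ℝ) (R : Finset ι)
    (hw : ∀ i ∈ R, 0 < w i) (m : ℕ) {x : ℝ} (hx : 0 < x) :
    HasDerivAt (Hfun w R m) (-((m : ℝ) + 1) * Hfun w R (m + 1) x) x := by
  have key : ∀ T ∈ R.powerset,
      HasDerivAt (fun y : ℝ => (-1 : ℝ) ^ T.card / (y + ∑ i ∈ T, w i) ^ (m + 1))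
        (-((m : ℝ) + 1) * ((-1 : ℝ) ^ T.card / (x + ∑ i ∈ T, w i) ^ (m + 1 + 1))) x := by
    intro T hT
    have hs : 0 ≤ ∑ i ∈ T, w i :=
      Finset.sum_nonneg fun i hi => (hw i (Finset.mem_powerset.1 hT hi)).le
    have hxa : 0 < x + ∑ i ∈ T, w i := by linarith
    have h1 : HasDerivAt (fun y : ℝ => (y + ∑ i ∈ T, w i) ^ (m + 1))
        (((m : ℝ) + 1) * (x + ∑ i ∈ T, w i) ^ m) x := by
      have := ((hasDerivAt_id x).add_const (∑ i ∈ T, w i)).fun_pow (m + 1)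
      simpa using this
    have h2 : HasDerivAt (fun y : ℝ => ((y + ∑ i ∈ T, w i) ^ (m + 1))⁻¹)
        (-(((m : ℝ) + 1) * (x + ∑ i ∈ T, w i) ^ m) /
          ((x + ∑ i ∈ T, w i) ^ (m + 1)) ^ 2) x :=
      h1.inv (pow_ne_zero _ hxa.ne')
    have heq : -(((m : ℝ) + 1) * (x + ∑ i ∈ T, w i) ^ m) /
          ((x + ∑ i ∈ T, w i) ^ (m + 1)) ^ 2
        = -((m : ℝ) + 1) * ((x + ∑ i ∈ T, w i) ^ (m + 1 + 1))⁻¹ := by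
      rw [← pow_mul]
      rw [div_eq_iff (by positivity)]
      field_simp
      ring
    rw [heq] at h2
    have h3 := h2.const_mul ((-1 : ℝ) ^ T.card)
    have heq2 : ∀ y : ℝ, (-1 : ℝ) ^ T.card * ((y + ∑ i ∈ T, w i) ^ (m + 1))⁻¹
        = (-1 : ℝ) ^ T.card / (y + ∑ i ∈ T, w i) ^ (m + 1) := fun y => by
      rw [div_eq_mul_inv]
    simp only [heq2] at h3
    refine h3.congr_deriv ?_
    rw [div_eq_mul_inv]
    ring
  refine (HasDerivAt.fun_sum key).congr_deriv ?_
  unfold Hfun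
  rw [Finset.mul_sum]

lemma Hfun_pos {ι : Type*} [DecidableEq ι] (w : ι → ℝ) (R : Finset ι)
    (hw : ∀ i ∈ R, 0 < w i) : ∀ m : ℕ, ∀ x : ℝ, 0 < x → 0 < Hfun w R m x := by
  classical
  induction R using Finset.induction_on with
  | empty =>
    intro m x hx
    unfold Hfun
    simp only [Finset.powerset_empty, Finset.sum_singleton, Finset.card_empty, pow_zero,
      Finset.sum_empty, add_zero]
    positivity
  | @insert j R hj ih =>
    intro m x hx
    have hwR : ∀ i ∈ R, 0 < w i := fun i hi => hw i (Finset.mem_insert_of_mem hi)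
    have hwj : 0 < w j := hw j (Finset.mem_insert_self j R)
    have hanti : StrictAntiOn (Hfun w R m) (Set.Ioi 0) := by
      apply strictAntiOn_of_deriv_neg (convex_Ioi 0)
      · intro y hy
        exact (Hfun_hasDerivAt w R hwR m hy).continuousAt.continuousWithinAt
      · intro y hy
        rw [interior_Ioi] at hy
        rw [(Hfun_hasDerivAt w R hwR m hy).deriv]
        have := ih hwR (m + 1) y hy
        nlinarith
    rw [Hfun_insert w hj]
    have hmem : x ∈ Set.Ioi (0 : ℝ) := hx
    have hmem2 : x + w j ∈ Set.Ioi (0 : ℝ) := by simp; linarith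
    have := hanti hmem hmem2 (by linarith)
    linarith

lemma Hfun_strictAntiOn {ι : Type*} [DecidableEq ι] (w : ι → ℝ) (R : Finset ι)
    (hw : ∀ i ∈ R, 0 < w i) (m : ℕ) : StrictAntiOn (Hfun w R m) (Set.Ioi 0) := by
  apply strictAntiOn_of_deriv_neg (convex_Ioi 0)
  · intro y hy
    exact (Hfun_hasDerivAt w R hw m hy).continuousAt.continuousWithinAt
  · intro y hy
    rw [interior_Ioi] at hy
    rw [(Hfun_hasDerivAt w R hw m hy).deriv]
    have := Hfun_pos w R hw (m + 1) y hy
    nlinarith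

theorem expected_max_strictly_decreasing_in_rate
    (K : ℕ) (hK : 0 < K) (lam : Fin K → ℝ) (hlam : ∀ i, 0 < lam i) :
    StrictAntiOn
      (fun x : ℝ =>
        ∑ S ∈ Finset.univ.powerset.filter (· ≠ (∅ : Finset (Fin K))),
          (-1 : ℝ) ^ (S.card - 1) /
            (∑ i ∈ S, (if i = ⟨0, hK⟩ then x else lam i)))
      (Set.Ioi 0) := by
  classical
  set z : Fin K := ⟨0, hK⟩ with hz
  set R : Finset (Fin K) := Finset.univ.erase z with hR
  have hjR : z ∉ R := Finset.notMem_erase z _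
  have hins : insert z R = Finset.univ := Finset.insert_erase (Finset.mem_univ z)
  have hwR : ∀ i ∈ R, 0 < lam i := fun i _ => hlam i
  have key : ∀ x : ℝ,
      (∑ S ∈ Finset.univ.powerset.filter (· ≠ (∅ : Finset (Fin K))),
          (-1 : ℝ) ^ (S.card - 1) / (∑ i ∈ S, (if i = z then x else lam i)))
        = Hfun lam R 0 x
          + ∑ T ∈ R.powerset, (-1 : ℝ) ^ (T.card - 1) / (∑ i ∈ T, lam i) := by
    intro x
    have hdrop : (∑ S ∈ Finset.univ.powerset.filter (· ≠ (∅ : Finset (Fin K))),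
        (-1 : ℝ) ^ (S.card - 1) / (∑ i ∈ S, (if i = z then x else lam i)))
        = ∑ S ∈ (Finset.univ : Finset (Fin K)).powerset,
            (-1 : ℝ) ^ (S.card - 1) / (∑ i ∈ S, (if i = z then x else lam i)) := by
      apply Finset.sum_filter_of_ne
      intro S _ hne
      intro hS
      apply hne
      subst hS
      simp
    rw [hdrop, ← hins, Finset.sum_powerset_insert hjR]
    have h1 : ∑ T ∈ R.powerset,
        (-1 : ℝ) ^ (T.card - 1) / (∑ i ∈ T, (if i = z then x else lam i))
        = ∑ T ∈ R.powerset, (-1 : ℝ) ^ (T.card - 1) / (∑ i ∈ T, lam i) := by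
      apply Finset.sum_congr rfl
      intro T hT
      congr 1
      apply Finset.sum_congr rfl
      intro i hi
      have : i ≠ z := fun h => hjR (h ▸ Finset.mem_powerset.1 hT hi)
      simp [this]
    have h2 : ∑ T ∈ R.powerset,
        (-1 : ℝ) ^ ((insert z T).card - 1) /
          (∑ i ∈ insert z T, (if i = z then x else lam i))
        = Hfun lam R 0 x := by
      unfold Hfun
      apply Finset.sum_congr rfl
      intro T hT
      have hzT : z ∉ T := fun h => hjR (Finset.mem_powerset.1 hT h)
      rw [Finset.card_insert_of_notMem hzT, Finset.sum_insert hzT]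
      have hsum : (∑ i ∈ T, (if i = z then x else lam i)) = ∑ i ∈ T, lam i := by
        apply Finset.sum_congr rfl
        intro i hi
        have : i ≠ z := fun h => hzT (h ▸ hi)
        simp [this]
      simp [hsum]
    rw [h1, h2]
    ring
  intro x hx y hy hxy
  simp only [key]
  have := Hfun_strictAntiOn lam R hwR 0 hx hy hxy
  linarith
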